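/- Let T0 < T1 and S0 ≤ S1 be real numbers, and let F : [T0,T1] × [S0,S1] → ℝ be a continuous function such that (1) for each s ∈ [S0,S1] the function t ↦ F(t,s) is strictly monotone, and (2) there exists a real r with F(T0,s) ≤ r ≤ F(T1,s) for all s ∈ [S0,S1]. Then there exists a continuous function t : [S0,S1] → [T0,T1] such that the level set { (p,s) ∈ [T0,T1] × [S0,S1] : F(p,s) = r } equals { (t(s), s) : s ∈ [S0,S1] }; in particular this level set is the image of the embedded continuous curve s ↦ (t(s), s). -/

import Mathlib

open Topology Filter


/-- an implicit function theorem.  If `F` is continuous on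
`[T0,T1] × [S0,S1]`, strictly monotone in the first variable for each fixed second
variable, and `F(T0,s) ≤ r ≤ F(T1,s)` for all `s`, then the level set `{F = r}` is the
image of an embedded continuous curve `s ↦ (t s, s)`. -/
theorem levelSet_is_graph_of_continuous_function
    (T0 T1 S0 S1 : ℝ) (hT : T0 < T1) (hS : S0 ≤ S1)
    (F : ℝ × ℝ → ℝ)
    (hF : ContinuousOn F (Set.Icc T0 T1 ×ˢ Set.Icc S0 S1))
    (hmono : ∀ s ∈ Set.Icc S0 S1,
      StrictMonoOn (fun t => F (t, s)) (Set.Icc T0 T1) ∨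
      StrictAntiOn (fun t => F (t, s)) (Set.Icc T0 T1))
    (r : ℝ)
    (hr : ∀ s ∈ Set.Icc S0 S1, F (T0, s) ≤ r ∧ r ≤ F (T1, s)) :
    ∃ t : ℝ → ℝ, ContinuousOn t (Set.Icc S0 S1) ∧
      (∀ s ∈ Set.Icc S0 S1, t s ∈ Set.Icc T0 T1) ∧
      {p ∈ Set.Icc T0 T1 ×ˢ Set.Icc S0 S1 | F p = r} =
        (fun s => (t s, s)) '' Set.Icc S0 S1 := by
  -- the anti case is impossible
  have hmono' : ∀ s ∈ Set.Icc S0 S1, StrictMonoOn (fun t => F (t, s)) (Set.Icc T0 T1) := by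
    intro s hs
    rcases hmono s hs with h | h
    · exact h
    · exfalso
      have h1 : F (T1, s) < F (T0, s) :=
        h (Set.left_mem_Icc.2 hT.le) (Set.right_mem_Icc.2 hT.le) hT
      obtain ⟨h2, h3⟩ := hr s hs
      linarith
  -- existence of solutions via IVT
  have key : ∀ s ∈ Set.Icc S0 S1, ∃ x ∈ Set.Icc T0 T1, F (x, s) = r := by
    intro s hs
    have hc : ContinuousOn (fun x => F (x, s)) (Set.Icc T0 T1) := by
      apply hF.comp (Continuous.continuousOn (by continuity))
      intro x hx
      exact ⟨hx, hs⟩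
    have := intermediate_value_Icc hT.le hc
    have hrmem : r ∈ Set.Icc (F (T0, s)) (F (T1, s)) := ⟨(hr s hs).1, (hr s hs).2⟩
    obtain ⟨x, hx, hfx⟩ := this hrmem
    exact ⟨x, hx, hfx⟩
  choose! u hu1 hu2 using key
  -- uniqueness
  have huniq : ∀ s ∈ Set.Icc S0 S1, ∀ x ∈ Set.Icc T0 T1, F (x, s) = r → x = u s := by
    intro s hs x hx hfx
    exact (hmono' s hs).injOn hx (hu1 s hs) (by simpa using hfx.trans (hu2 s hs).symm)
  -- the level set is closed
  have hK : IsClosed {p ∈ Set.Icc T0 T1 ×ˢ Set.Icc S0 S1 | F p = r} := by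
    have : {p ∈ Set.Icc T0 T1 ×ˢ Set.Icc S0 S1 | F p = r}
        = (Set.Icc T0 T1 ×ˢ Set.Icc S0 S1) ∩ F ⁻¹' {r} := by
      ext p; simp [Set.mem_sep_iff]
    rw [this]
    exact hF.preimage_isClosed_of_isClosed
      ((isClosed_Icc).prod isClosed_Icc) isClosed_singleton
  refine ⟨u, ?_, hu1, ?_⟩
  · -- continuity
    intro s0 hs0
    have hl : 𝓝[Set.Icc S0 S1] s0 ≤ 𝓝 s0 := nhdsWithin_le_nhds
    apply (isCompact_Icc : IsCompact (Set.Icc T0 T1)).tendsto_nhds_of_unique_mapClusterPt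
    · exact eventually_mem_nhdsWithin.mono fun s hs => hu1 s hs
    · intro x hx hcl
      have hcl' : MapClusterPt (x, s0) (𝓝[Set.Icc S0 S1] s0) (fun s => (u s, s)) := by
        rw [mapClusterPt_iff_frequently]
        intro U hU
        rw [mem_nhds_prod_iff] at hU
        obtain ⟨V, hV, W, hW, hVW⟩ := hU
        have h1 : ∃ᶠ s in 𝓝[Set.Icc S0 S1] s0, u s ∈ V := mapClusterPt_iff_frequently.1 hcl V hV
        have h2 : ∀ᶠ s in 𝓝[Set.Icc S0 S1] s0, s ∈ W := hl hW
        exact (h1.and_eventually h2).mono fun s ⟨hsV, hsW⟩ => hVW ⟨hsV, hsW⟩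
      have hmem : (x, s0) ∈ {p ∈ Set.Icc T0 T1 ×ˢ Set.Icc S0 S1 | F p = r} := by
        rw [← hK.closure_eq]
        rw [mem_closure_iff_clusterPt]
        refine hcl'.clusterPt.mono (le_principal_iff.2 ?_)
        rw [Filter.mem_map]
        exact Filter.mem_of_superset self_mem_nhdsWithin
          fun s hs => ⟨⟨hu1 s hs, hs⟩, hu2 s hs⟩
      exact huniq s0 hs0 x hx hmem.2
  · -- set equality
    ext p
    constructor
    · rintro ⟨⟨hp1, hp2⟩, hpr⟩
      refine ⟨p.2, hp2, ?_⟩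
      have := huniq p.2 hp2 p.1 hp1 (by rwa [Prod.mk.eta])
      simp [← this]
    · rintro ⟨s, hs, rfl⟩
      exact ⟨⟨hu1 s hs, hs⟩, hu2 s hs⟩
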